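/- arXiv:1310.4141 — 9 statements merged into one kernel-verified Lean document; each statement's English description precedes it below -/
import Mathlib

section
/- Let D be a directed acyclic graph and let f be a topological additive numbering of D (i.e., a labeling f : V → positive integers such that S(u) < S(v) for every arc (u,v), where S(v) = Σ_{w ∈ N(v)} f(w) and N(v) is the set of neighbors of v in the underlying undirected graph). Let Q be a clique of the underlying graph, and let q_F and q_L be the vertices of Q that are, respectively, minimal and maximal with respect to the ordering induced by the arcs within Q (i.e., all arcs inside Q go from smaller to larger vertices in a fixed topological order). If all labels of f are at most k, then k ≥ ⌈(d(q_F)+1)/(d(q_L)−|Q|+2)⌉, where d(v) denotes the degree of v in the underlying graph. -/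
open Finset

/-- Neighborhood of `v` in the underlying undirected graph of the digraph `A`. -/
def nbr {V : Type} [Fintype V] [DecidableEq V] (A : V → V → Prop) [DecidableRel A] (v : V) :
    Finset V := Finset.univ.filter fun w => A v w ∨ A w v

/-- `S(v) = Σ_{w ∈ N(v)} f(w)`. -/
def Svert {V : Type} [Fintype V] [DecidableEq V] (A : V → V → Prop) [DecidableRel A]
    (f : V → ℕ) (v : V) : ℕ := ∑ w ∈ nbr A v, f w

/-- `f` is a topological additive numbering: positive labels with `S(u) < S(v)` on every arc. -/
def IsTAN {V : Type} [Fintype V] [DecidableEq V] (A : V → V → Prop) [DecidableRel A]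
    (f : V → ℕ) : Prop := (∀ v, 1 ≤ f v) ∧ ∀ u v, A u v → Svert A f u < Svert A f v

/-- The digraph `A` is acyclic. -/
def Acyclic {V : Type} (A : V → V → Prop) : Prop := ∀ v, ¬ Relation.TransGen A v v

/-- The topological additive number `η_t(D)`. -/
noncomputable def etat {V : Type} [Fintype V] [DecidableEq V] (A : V → V → Prop) [DecidableRel A] : ℕ :=
  sInf {k | ∃ f, IsTAN A f ∧ ∀ v, f v ≤ k}

/-- clique lower bound for the largest label of a topological additive numbering. -/
theorem stmt_0 {V : Type} [Fintype V] [DecidableEq V] (A : V → V → Prop) [DecidableRel A]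
    (hacyc : Acyclic A) (f : V → ℕ) (k : ℕ)
    (htan : IsTAN A f) (hk : ∀ v, f v ≤ k)
    (Q : Finset V) (hclique : ∀ q₁ ∈ Q, ∀ q₂ ∈ Q, q₁ ≠ q₂ → (A q₁ q₂ ∨ A q₂ q₁))
    (qF qL : V) (hqF : qF ∈ Q) (hqL : qL ∈ Q)
    (hFmin : ∀ q ∈ Q, q ≠ qF → A qF q)
    (hLmax : ∀ q ∈ Q, q ≠ qL → A q qL) :
    ((nbr A qF).card + 1) ⌈/⌉ ((nbr A qL).card - Q.card + 2) ≤ k := by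
  classical
  have hk1 : 1 ≤ k := le_trans (htan.1 qF) (hk qF)
  rw [ceilDiv_le_iff_le_mul (by omega : 0 < (nbr A qL).card - Q.card + 2)]
  by_cases hFL : qF = qL
  · -- Q = {qF}
    have hQ : Q = {qF} := by
      apply Finset.eq_singleton_iff_unique_mem.mpr
      refine ⟨hqF, fun q hq => ?_⟩
      by_contra hne
      have h1 := hFmin q hq hne
      have h2 := hLmax q hq (by rw [← hFL]; exact hne)
      rw [← hFL] at h2
      exact hacyc qF (Relation.TransGen.head h1 (Relation.TransGen.single h2))
    subst hFL
    rw [hQ, Finset.card_singleton]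
    have := Nat.le_mul_of_pos_right ((nbr A qF).card - 1 + 2) hk1
    omega
  -- main case
  have hne' : qL ≠ qF := fun h => hFL h.symm
  have hm2 : 2 ≤ Q.card := Finset.one_lt_card.mpr ⟨qF, hqF, qL, hqL, hFL⟩
  -- injectivity of Svert on Q
  have hinj : Set.InjOn (Svert A f) Q := by
    intro a ha b hb hab
    by_contra hne
    rcases hclique a ha b hb hne with h | h
    · exact absurd hab (Nat.ne_of_lt (htan.2 a b h))
    · exact absurd hab.symm (Nat.ne_of_lt (htan.2 b a h))
  have hcardim : (Q.image (Svert A f)).card = Q.card :=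
    Finset.card_image_of_injOn hinj
  have hsub : Q.image (Svert A f) ⊆ Finset.Icc (Svert A f qF) (Svert A f qL) := by
    intro x hx
    obtain ⟨q, hq, rfl⟩ := Finset.mem_image.mp hx
    rw [Finset.mem_Icc]
    constructor
    · rcases eq_or_ne q qF with rfl | h
      · exact le_rfl
      · exact le_of_lt (htan.2 qF q (hFmin q hq h))
    · rcases eq_or_ne q qL with rfl | h
      · exact le_rfl
      · exact le_of_lt (htan.2 q qL (hLmax q hq h))
  have hIcc := Finset.card_le_card hsub
  rw [hcardim, Nat.card_Icc] at hIcc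
  have hchain : Svert A f qF + (Q.card - 1) ≤ Svert A f qL := by omega
  -- subset facts
  have hsubF : Q.erase qF ⊆ nbr A qF := by
    intro q hq
    rw [Finset.mem_erase] at hq
    simp only [nbr, Finset.mem_filter, Finset.mem_univ, true_and]
    exact Or.inl (hFmin q hq.2 hq.1)
  have hsubL : Q.erase qL ⊆ nbr A qL := by
    intro q hq
    rw [Finset.mem_erase] at hq
    simp only [nbr, Finset.mem_filter, Finset.mem_univ, true_and]
    exact Or.inr (hLmax q hq.2 hq.1)
  -- sum splits
  have h1 : ∑ w ∈ nbr A qF \ Q.erase qF, f w + ∑ w ∈ Q.erase qF, f w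
      = Svert A f qF := Finset.sum_sdiff hsubF
  have h2 : ∑ w ∈ nbr A qL \ Q.erase qL, f w + ∑ w ∈ Q.erase qL, f w
      = Svert A f qL := Finset.sum_sdiff hsubL
  have h3 : (nbr A qF \ Q.erase qF).card ≤ ∑ w ∈ nbr A qF \ Q.erase qF, f w := by
    have := Finset.card_nsmul_le_sum (nbr A qF \ Q.erase qF) f 1 (fun x _ => htan.1 x)
    simpa using this
  have h4 : ∑ w ∈ nbr A qL \ Q.erase qL, f w ≤ (nbr A qL \ Q.erase qL).card * k := by
    have := Finset.sum_le_card_nsmul (nbr A qL \ Q.erase qL) f k (fun x _ => hk x)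
    simpa using this
  have h5 : (nbr A qF \ Q.erase qF).card + (Q.erase qF).card = (nbr A qF).card :=
    Finset.card_sdiff_add_card_eq_card hsubF
  have h5' : (nbr A qL \ Q.erase qL).card + (Q.erase qL).card = (nbr A qL).card :=
    Finset.card_sdiff_add_card_eq_card hsubL
  have hceF : (Q.erase qF).card = Q.card - 1 := Finset.card_erase_of_mem hqF
  have hceL : (Q.erase qL).card = Q.card - 1 := Finset.card_erase_of_mem hqL
  have hqLmem : qL ∈ Q.erase qF := Finset.mem_erase.mpr ⟨hne', hqL⟩
  have hqFmem : qF ∈ Q.erase qL := Finset.mem_erase.mpr ⟨hFL, hqF⟩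
  have h6 : ∑ w ∈ (Q.erase qF).erase qL, f w + f qL = ∑ w ∈ Q.erase qF, f w :=
    Finset.sum_erase_add _ _ hqLmem
  have h7 : ∑ w ∈ (Q.erase qF).erase qL, f w + f qF = ∑ w ∈ Q.erase qL, f w := by
    have hec : (Q.erase qF).erase qL = (Q.erase qL).erase qF := by
      ext x; simp only [Finset.mem_erase]; tauto
    rw [hec]
    exact Finset.sum_erase_add _ _ hqFmem
  -- combine linearly (product terms treated as atoms)
  have hA : f qL + (nbr A qF).card ≤ f qF + ∑ w ∈ nbr A qL \ Q.erase qL, f w := by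
    omega
  have hden : (nbr A qL \ Q.erase qL).card + 1 ≤ (nbr A qL).card - Q.card + 2 := by
    omega
  have hfqL : 1 ≤ f qL := htan.1 qL
  have hfqF : f qF ≤ k := hk qF
  calc (nbr A qF).card + 1 ≤ (nbr A qL \ Q.erase qL).card * k + k := by linarith
    _ = ((nbr A qL \ Q.erase qL).card + 1) * k := by ring
    _ ≤ ((nbr A qL).card - Q.card + 2) * k := Nat.mul_le_mul_right k hden
end

section
/- Let D be a directed acyclic graph and u, v two vertices such that N(u) ⊆ N(v) (neighborhoods in the underlying undirected graph). If there is a directed path from v to u in D, then D admits no topological additive numbering, i.e., there is no labeling f : V → positive integers with S(x) < S(y) for every arc (x,y), where S(x) = Σ_{w∈N(x)} f(w). -/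
open Finset

/-- if `N(u) ⊆ N(v)` and there is a directed path from `v` to `u`,
then `D` has no topological additive numbering. -/
theorem stmt_1 {V : Type} [Fintype V] [DecidableEq V] (A : V → V → Prop) [DecidableRel A]
    (hacyc : Acyclic A) (u v : V)
    (hsub : nbr A u ⊆ nbr A v)
    (hpath : Relation.TransGen A v u) :
    ¬ ∃ f : V → ℕ, IsTAN A f := by
  rintro ⟨f, hpos, harc⟩
  have hmono : ∀ a b, Relation.TransGen A a b → Svert A f a < Svert A f b := by
    intro a b h
    induction h with
    | single h => exact harc _ _ h
    | tail _ h ih => exact ih.trans (harc _ _ h)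
  have hle : Svert A f u ≤ Svert A f v :=
    Finset.sum_le_sum_of_subset hsub
  exact absurd (hmono v u hpath) (not_lt.mpr hle)
end

section
/- Let D be a complete monotone r-partite digraph with parts V_1,…,V_r (so the underlying graph is complete r-partite and every arc from V_i to V_j satisfies i < j). Define s_r = |V_r| and s_i = max(1 + s_{i+1}, |V_i|) for i = r−1,…,1. Then D admits a topological additive numbering and η_t(D) = max{ ⌈s_i/|V_i|⌉ : i = 1,…,r }. -/
open Finset

lemma one_le_ceilDiv' {s n : ℕ} (hn : 0 < n) (hs : 0 < s) : 1 ≤ s ⌈/⌉ n := by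
  by_contra h
  have h0 : s ⌈/⌉ n ≤ 0 := by omega
  have := (ceilDiv_le_iff_le_mul hn).1 h0
  omega

lemma distrib {V : Type} [DecidableEq V] {t : Finset V} (hne : t.Nonempty) :
    ∀ m : ℕ, t.card ≤ m →
    ∃ g : V → ℕ, (∀ v ∈ t, 1 ≤ g v ∧ g v ≤ m ⌈/⌉ t.card) ∧ ∑ v ∈ t, g v = m := by
  induction hne using Finset.Nonempty.cons_induction with
  | singleton a =>
    intro m hm
    simp only [Finset.card_singleton] at hm ⊢
    exact ⟨fun _ => m, fun v hv => by simp [hm], by simp⟩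
  | cons a t h ht ih =>
    intro m hm
    rw [Finset.card_cons] at hm
    have hn1 : 1 ≤ t.card := Finset.card_pos.mpr ht
    set n := t.card with hn
    set q := m ⌈/⌉ (n + 1) with hq
    have hq1 : 1 ≤ q := one_le_ceilDiv' (by omega) (by omega)
    have hmq : m ≤ (n + 1) * q := (ceilDiv_le_iff_le_mul (by omega)).1 le_rfl
    have hmq' : (n + 1) * q = n * q + q := by ring
    set ga := min q (m - n) with hga
    have h1 : 1 ≤ ga := by omega
    have h2 : n ≤ m - ga := by omega
    have hnq : n ≤ n * q := Nat.le_mul_of_pos_right n hq1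
    have h3 : (m - ga) ⌈/⌉ n ≤ q := by
      rw [ceilDiv_le_iff_le_mul (by omega : (0:ℕ) < n)]
      omega
    obtain ⟨g, hg, hsum⟩ := ih (m - ga) h2
    refine ⟨Function.update g a ga, ?_, ?_⟩
    · intro v hv
      rw [Finset.mem_cons] at hv
      rw [Finset.card_cons]
      rcases hv with rfl | hv
      · rw [Function.update_self]
        exact ⟨h1, min_le_left _ _⟩
      · have hva : v ≠ a := by rintro rfl; exact h hv
        rw [Function.update_of_ne hva]
        obtain ⟨l, u⟩ := hg v hv
        exact ⟨l, u.trans h3⟩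
    · rw [Finset.sum_cons, Function.update_self]
      have : ∑ v ∈ t, Function.update g a ga v = ∑ v ∈ t, g v :=
        Finset.sum_congr rfl fun v hv =>
          Function.update_of_ne (by rintro rfl; exact h hv) _ _
      rw [this, hsum]
      omega

/-- `η_t` of a complete monotone `r`-partite digraph. -/
theorem stmt_4 {V : Type} [Fintype V] [DecidableEq V] (A : V → V → Prop) [DecidableRel A]
    (r : ℕ) (hr : 1 ≤ r) (part : V → ℕ) (hpart : ∀ v, part v < r)
    (hnonempty : ∀ i < r, ∃ v, part v = i)
    (hcomplete : ∀ u v, (A u v ∨ A v u) ↔ part u ≠ part v)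
    (hmono : ∀ u v, A u v → part u < part v)
    (s : ℕ → ℕ)
    (hslast : s (r - 1) = (Finset.univ.filter fun v => part v = r - 1).card)
    (hsrec : ∀ i, i + 1 < r →
      s i = max (1 + s (i + 1)) (Finset.univ.filter fun v => part v = i).card) :
    (∃ f : V → ℕ, IsTAN A f) ∧
    etat A = (Finset.range r).sup
      (fun i => s i ⌈/⌉ (Finset.univ.filter fun v => part v = i).card) := by
  set t : ℕ → Finset V := fun i => Finset.univ.filter fun v => part v = i with ht
  set K : ℕ := (Finset.range r).sup (fun i => s i ⌈/⌉ (t i).card) with hK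
  -- basic facts
  have hne : ∀ i, i < r → (t i).Nonempty := by
    intro i hi
    obtain ⟨v, hv⟩ := hnonempty i hi
    exact ⟨v, by simp [ht, hv]⟩
  have hmemt : ∀ v : V, v ∈ t (part v) := by intro v; simp [ht]
  have harc : ∀ u v, part u < part v → A u v := by
    intro u v h
    rcases (hcomplete u v).2 (by omega) with h' | h'
    · exact h'
    · exact absurd (hmono v u h') (by omega)
  have hns : ∀ i, i < r → (t i).card ≤ s i := by
    intro i hi
    rcases Nat.lt_or_ge (i + 1) r with h | h
    · rw [hsrec i h]; exact le_max_right _ _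
    · have : i = r - 1 := by omega
      subst this
      rw [hslast]
  have sstep : ∀ i, i + 1 < r → s (i + 1) < s i := by
    intro i h
    rw [hsrec i h]
    omega
  have sdec : ∀ j, j < r → ∀ i, i < j → s j < s i := by
    intro j
    induction j with
    | zero => omega
    | succ k ih =>
      intro hk i hi
      have hstep : s (k + 1) < s k := sstep k hk
      rcases Nat.lt_or_ge i k with h' | h'
      · exact hstep.trans (ih (by omega) i h')
      · have : i = k := by omega
        subst this; exact hstep
  have hnbr : ∀ v, nbr A v = Finset.univ.filter fun w => ¬ part w = part v := by
    intro v
    ext w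
    simp only [nbr, mem_filter, mem_univ, true_and]
    rw [hcomplete v w]
    exact ne_comm
  have hSvert : ∀ (f : V → ℕ) (v : V),
      Svert A f v + ∑ w ∈ t (part v), f w = ∑ w, f w := by
    intro f v
    rw [Svert, hnbr v, add_comm]
    exact Finset.sum_filter_add_sum_filter_not _ _ _
  -- lower bound: any bounded TAN beats K
  have lower : ∀ (f : V → ℕ) (k : ℕ), IsTAN A f → (∀ v, f v ≤ k) → K ≤ k := by
    rintro f k ⟨hf1, hf2⟩ hfk
    have hTle : ∀ j, (∑ w ∈ t j, f w) ≤ ∑ w, f w := fun j =>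
      Finset.sum_le_sum_of_subset (Finset.filter_subset _ _)
    have hTcard : ∀ j, (t j).card ≤ ∑ w ∈ t j, f w := by
      intro j
      calc (t j).card = ∑ _w ∈ t j, 1 := by simp
        _ ≤ ∑ w ∈ t j, f w := Finset.sum_le_sum fun w _ => hf1 w
    have hTdec : ∀ j, j + 1 < r → (∑ w ∈ t (j + 1), f w) < ∑ w ∈ t j, f w := by
      intro j hj
      obtain ⟨u, hu⟩ := hnonempty j (by omega)
      obtain ⟨v, hv⟩ := hnonempty (j + 1) hj
      have huv := hf2 u v (harc u v (by omega))
      have h1 := hSvert f u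
      have h2 := hSvert f v
      rw [hu] at h1
      rw [hv] at h2
      have := hTle j
      have := hTle (j + 1)
      omega
    have hTs : ∀ d j, j < r → r - 1 - j = d → s j ≤ ∑ w ∈ t j, f w := by
      intro d
      induction d with
      | zero =>
        intro j hj hd
        have : j = r - 1 := by omega
        subst this
        rw [hslast]
        exact hTcard _
      | succ c ih =>
        intro j hj hd
        have hj1 : j + 1 < r := by omega
        have h1 := ih (j + 1) (by omega) (by omega)
        have h2 := hTdec j hj1
        have h3 := hTcard j
        rw [hsrec j hj1]
        have hcc : (Finset.univ.filter fun v => part v = j).card = (t j).card := rfl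
        omega
    rw [hK]
    apply Finset.sup_le
    intro i hi
    rw [Finset.mem_range] at hi
    have h1 : s i ≤ ∑ w ∈ t i, f w := hTs (r - 1 - i) i hi rfl
    have h2 : (∑ w ∈ t i, f w) ≤ (t i).card * k := by
      calc (∑ w ∈ t i, f w) ≤ ∑ _w ∈ t i, k := Finset.sum_le_sum fun w _ => hfk w
        _ = (t i).card * k := by rw [Finset.sum_const, smul_eq_mul]
    rw [ceilDiv_le_iff_le_mul (Finset.card_pos.mpr (hne i hi))]
    omega
  -- upper bound construction
  have hexists : ∀ i : ℕ, ∃ g : V → ℕ, i < r →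
      (∀ v ∈ t i, 1 ≤ g v ∧ g v ≤ s i ⌈/⌉ (t i).card) ∧ ∑ v ∈ t i, g v = s i := by
    intro i
    by_cases hi : i < r
    · obtain ⟨g, hg⟩ := distrib (hne i hi) (s i) (hns i hi)
      exact ⟨g, fun _ => hg⟩
    · exact ⟨fun _ => 1, fun h => absurd h hi⟩
  choose g hg using hexists
  set f : V → ℕ := fun v => g (part v) v with hf
  have hfsum : ∀ i, i < r → ∑ v ∈ t i, f v = s i := by
    intro i hi
    rw [← (hg i hi).2]
    refine Finset.sum_congr rfl fun v hv => ?_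
    have hpv : part v = i := by
      simpa [ht] using hv
    rw [hf]
    simp only [hpv]
  have hf1 : ∀ v, 1 ≤ f v := by
    intro v
    exact ((hg (part v) (hpart v)).1 v (hmemt v)).1
  have hfK : ∀ v, f v ≤ K := by
    intro v
    refine le_trans ((hg (part v) (hpart v)).1 v (hmemt v)).2 ?_
    rw [hK]
    exact Finset.le_sup (f := fun i => s i ⌈/⌉ (t i).card) (Finset.mem_range.mpr (hpart v))
  have htan : IsTAN A f := by
    refine ⟨hf1, ?_⟩
    intro u v huv
    have hlt := hmono u v huv
    have h1 := hSvert f u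
    have h2 := hSvert f v
    rw [hfsum (part u) (hpart u)] at h1
    rw [hfsum (part v) (hpart v)] at h2
    have hs1 : s (part v) < s (part u) := sdec (part v) (hpart v) (part u) hlt
    have hs2 : s (part u) ≤ ∑ w, f w := by
      rw [← h1]; omega
    omega
  refine ⟨⟨f, htan⟩, ?_⟩
  apply le_antisymm
  · exact Nat.sInf_le ⟨f, htan, hfK⟩
  · exact le_csInf ⟨K, f, htan, hfK⟩ (by rintro k ⟨f', hf', hk⟩; exact lower f' k hf' hk)
end

section
/- Let D be a monotone bipartite digraph with parts V_1, V_2 (every arc goes from V_1 to V_2), with at least one arc. Then D admits a topological additive numbering and η_t(D) = max{ ⌊d(u)/d(v)⌋ + 1 : v ∈ V_2, u ∈ N(v) }, where d denotes degree in the underlying undirected graph. -/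
open Finset

/-- `η_t` of a monotone bipartite digraph with at least one arc. -/
theorem stmt_6 {V : Type} [Fintype V] [DecidableEq V] (A : V → V → Prop) [DecidableRel A]
    (V1 V2 : Finset V) (hdisj : Disjoint V1 V2) (hcover : V1 ∪ V2 = Finset.univ)
    (harcs : ∀ u v, A u v → u ∈ V1 ∧ v ∈ V2)
    (hbip : ∀ u v, (A u v ∨ A v u) → (u ∈ V1 ∧ v ∈ V2) ∨ (u ∈ V2 ∧ v ∈ V1))
    (hne : ∃ u v, A u v) :
    (∃ f : V → ℕ, IsTAN A f) ∧
    etat A = sSup {m : ℕ | ∃ v ∈ V2, ∃ u ∈ nbr A v,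
      m = (nbr A u).card / (nbr A v).card + 1} := by
  classical
  set S : Set ℕ := {m : ℕ | ∃ v ∈ V2, ∃ u ∈ nbr A v,
      m = (nbr A u).card / (nbr A v).card + 1} with hS
  -- membership in nbr
  have hmem : ∀ x y, (y ∈ nbr A x ↔ (A x y ∨ A y x)) := by
    intro x y; simp [nbr]
  -- for v ∈ V2, u ∈ nbr v implies arc u→v
  have harc_of_nbr : ∀ v ∈ V2, ∀ u ∈ nbr A v, A u v := by
    intro v hv u hu
    rcases (hmem v u).1 hu with h | h
    · exact absurd ((harcs v u h).1) (Finset.disjoint_right.mp hdisj hv)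
    · exact h
  -- neighbors of V1 vertices are in V2
  have hnbrV1 : ∀ u ∈ V1, ∀ w ∈ nbr A u, w ∈ V2 := by
    intro u hu w hw
    rcases (hmem u w).1 hw with h | h
    · exact (harcs u w h).2
    · exact absurd ((harcs w u h).2) (Finset.disjoint_left.mp hdisj hu)
  -- neighbors of V2 vertices are in V1
  have hnbrV2 : ∀ v ∈ V2, ∀ w ∈ nbr A v, w ∈ V1 := by
    intro v hv w hw
    exact (harcs w v (harc_of_nbr v hv w hw)).1
  have hSne : S.Nonempty := by
    obtain ⟨u, v, huv⟩ := hne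
    obtain ⟨hu1, hv2⟩ := harcs u v huv
    exact ⟨_, v, hv2, u, (hmem v u).2 (Or.inr huv), rfl⟩
  have hSbdd : BddAbove S := by
    refine ⟨Fintype.card V + 1, ?_⟩
    rintro m ⟨v, hv, u, hu, rfl⟩
    have h1 : (nbr A u).card ≤ Fintype.card V := Finset.card_le_univ _
    have h2 : (nbr A u).card / (nbr A v).card ≤ (nbr A u).card := Nat.div_le_self _ _
    omega
  set M : ℕ := sSup S with hM
  have hmleM : ∀ m ∈ S, m ≤ M := fun m hm => le_csSup hSbdd hm
  have hM1 : 1 ≤ M := by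
    obtain ⟨m, hm⟩ := hSne
    have := hmleM m hm
    obtain ⟨v, hv, u, hu, rfl⟩ := hm
    exact le_trans (Nat.le_add_left 1 _) this
  -- the construction
  set f : V → ℕ := fun x => if x ∈ V1 then M else 1 with hf
  have hf1 : ∀ x, 1 ≤ f x := by
    intro x; simp only [hf]; split <;> omega
  have hfTAN : IsTAN A f := by
    refine ⟨hf1, ?_⟩
    intro u v huv
    obtain ⟨hu1, hv2⟩ := harcs u v huv
    have hSu : Svert A f u = (nbr A u).card := by
      unfold Svert
      rw [Finset.sum_congr rfl (fun w hw => ?_), Finset.sum_const, smul_eq_mul, mul_one]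
      have hw2 := hnbrV1 u hu1 w hw
      have : w ∉ V1 := Finset.disjoint_right.mp hdisj hw2
      simp [hf, this]
    have hSv : Svert A f v = M * (nbr A v).card := by
      unfold Svert
      rw [Finset.sum_congr rfl (fun w hw => ?_), Finset.sum_const, smul_eq_mul, mul_comm]
      have hw1 := hnbrV2 v hv2 w hw
      simp [hf, hw1]
    rw [hSu, hSv]
    have huin : u ∈ nbr A v := (hmem v u).2 (Or.inr huv)
    have hmS : (nbr A u).card / (nbr A v).card + 1 ∈ S := ⟨v, hv2, u, huin, rfl⟩
    have hle := hmleM _ hmS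
    have hdv : 0 < (nbr A v).card := Finset.card_pos.2 ⟨u, huin⟩
    have hlt : (nbr A u).card < ((nbr A u).card / (nbr A v).card + 1) * (nbr A v).card :=
      (Nat.div_lt_iff_lt_mul hdv).1 (Nat.lt_succ_self _)
    calc (nbr A u).card < ((nbr A u).card / (nbr A v).card + 1) * (nbr A v).card := hlt
      _ ≤ M * (nbr A v).card := Nat.mul_le_mul_right _ hle
  constructor
  · exact ⟨f, hfTAN⟩
  · apply le_antisymm
    · apply Nat.sInf_le
      refine ⟨f, hfTAN, ?_⟩
      intro x; simp only [hf]; split <;> omega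
    · apply le_csInf
      · exact ⟨M, f, hfTAN, fun x => by simp only [hf]; split <;> omega⟩
      · rintro k ⟨g, ⟨hg1, hg2⟩, hgk⟩
        apply csSup_le hSne
        rintro m ⟨v, hv, u, hu, rfl⟩
        have huv : A u v := harc_of_nbr v hv u hu
        have h1 : (nbr A u).card ≤ Svert A g u := by
          unfold Svert
          calc (nbr A u).card = ∑ _w ∈ nbr A u, 1 := by simp
            _ ≤ ∑ w ∈ nbr A u, g w := Finset.sum_le_sum fun w _ => hg1 w
        have h2 : Svert A g v ≤ k * (nbr A v).card := by
          unfold Svert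
          calc ∑ w ∈ nbr A v, g w ≤ ∑ _w ∈ nbr A v, k := Finset.sum_le_sum fun w _ => hgk w
            _ = k * (nbr A v).card := by simp [mul_comm]
        have h3 := hg2 u v huv
        have hdv : 0 < (nbr A v).card := Finset.card_pos.2 ⟨u, hu⟩
        have hlt : (nbr A u).card < k * (nbr A v).card := by omega
        have := (Nat.div_lt_iff_lt_mul hdv).2 hlt
        omega
end

section
/- Let D be a monotone bipartite digraph with parts V_1, V_2 (arcs directed from V_1 to V_2). The labeling assigning p to every vertex of V_1 and 1 to every vertex of V_2, where p = max{⌊d(u)/d(v)⌋ + 1 : v ∈ V_2, u ∈ N(v)}, is a topological additive p-numbering of D. -/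
open Finset

/-- the labeling `p` on `V1` and `1` on `V2` is a topological additive
`p`-numbering of a monotone bipartite digraph. -/
theorem stmt_7 {V : Type} [Fintype V] [DecidableEq V] (A : V → V → Prop) [DecidableRel A]
    (V1 V2 : Finset V) (hdisj : Disjoint V1 V2) (hcover : V1 ∪ V2 = Finset.univ)
    (harcs : ∀ u v, A u v → u ∈ V1 ∧ v ∈ V2)
    (hbip : ∀ u v, (A u v ∨ A v u) → (u ∈ V1 ∧ v ∈ V2) ∨ (u ∈ V2 ∧ v ∈ V1))
    (hne : ∃ u v, A u v)
    (p : ℕ)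
    (hp : p = sSup {m : ℕ | ∃ v ∈ V2, ∃ u ∈ nbr A v,
      m = (nbr A u).card / (nbr A v).card + 1}) :
    IsTAN A (fun x => if x ∈ V1 then p else 1) ∧
    (∀ x, (if x ∈ V1 then p else 1) ≤ p) := by
  classical
  have hb : BddAbove {m : ℕ | ∃ v ∈ V2, ∃ u ∈ nbr A v,
      m = (nbr A u).card / (nbr A v).card + 1} := by
    refine ⟨Fintype.card V + 1, ?_⟩
    rintro m ⟨v, hv, u, hu, rfl⟩
    have h1 : (nbr A u).card / (nbr A v).card ≤ (nbr A u).card := Nat.div_le_self _ _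
    have h2 : (nbr A u).card ≤ Fintype.card V := Finset.card_le_univ _
    omega
  have key : ∀ u v, A u v → (nbr A u).card / (nbr A v).card + 1 ≤ p := by
    intro u v h
    rw [hp]
    exact le_csSup hb ⟨v, (harcs u v h).2, u, by simp [nbr, h], rfl⟩
  have hp1 : 1 ≤ p := by
    obtain ⟨u, v, h⟩ := hne
    exact le_trans (Nat.le_add_left 1 _) (key u v h)
  have hnbr1 : ∀ u ∈ V1, ∀ w ∈ nbr A u, w ∈ V2 := by
    intro u hu w hw
    simp only [nbr, Finset.mem_filter, Finset.mem_univ, true_and] at hw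
    rcases hw with h | h
    · exact (harcs u w h).2
    · exact absurd hu (Finset.disjoint_right.mp hdisj (harcs w u h).2)
  have hnbr2 : ∀ v ∈ V2, ∀ w ∈ nbr A v, w ∈ V1 := by
    intro v hv w hw
    simp only [nbr, Finset.mem_filter, Finset.mem_univ, true_and] at hw
    rcases hw with h | h
    · exact absurd hv (Finset.disjoint_left.mp hdisj (harcs v w h).1)
    · exact (harcs w v h).1
  refine ⟨⟨fun x => by by_cases hx : x ∈ V1 <;> simp [hx, hp1], ?_⟩,
    fun x => by by_cases hx : x ∈ V1 <;> simp [hx, hp1]⟩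
  intro u v h
  obtain ⟨hu1, hv2⟩ := harcs u v h
  have hSu : Svert A (fun x => if x ∈ V1 then p else 1) u = (nbr A u).card := by
    unfold Svert
    rw [Finset.sum_congr rfl (fun w hw => ?_), Finset.sum_const, smul_eq_mul, mul_one]
    have hw2 : w ∉ V1 := Finset.disjoint_right.mp hdisj (hnbr1 u hu1 w hw)
    simp [hw2]
  have hSv : Svert A (fun x => if x ∈ V1 then p else 1) v = p * (nbr A v).card := by
    unfold Svert
    rw [Finset.sum_congr rfl (fun w hw => ?_), Finset.sum_const, smul_eq_mul, mul_comm]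
    simp [hnbr2 v hv2 w hw]
  rw [hSu, hSv]
  have hdv : 0 < (nbr A v).card := Finset.card_pos.mpr ⟨u, by simp [nbr, h]⟩
  have hk := key u v h
  calc (nbr A u).card < ((nbr A u).card / (nbr A v).card + 1) * (nbr A v).card :=
        (Nat.div_lt_iff_lt_mul hdv).mp (Nat.lt_succ_self _)
    _ ≤ p * (nbr A v).card := Nat.mul_le_mul_right _ hk
end

section
/- Consider the variable gadget digraph for a variable x: vertices x, ¬x, x¹, x², x³, x⁴, x⁵, u¹,…,u⁶ (possibly embedded in a larger digraph where x and ¬x may have additional neighbors), with arcs (x¹,x), (x¹,¬x), (x²,x¹), (x³,x²), (x⁴,x²), (x⁵,x²), (u¹,x), (u²,x), (u³,x), (u⁴,¬x), (u⁵,¬x), (u⁶,¬x). If f is a topological additive 2-numbering of the containing digraph, then f(x) + f(¬x) ≥ 3. -/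
open Finset

/-- variable gadget — any topological additive 2-numbering satisfies
`f(x) + f(¬x) ≥ 3`. -/
theorem stmt_9 {V : Type} [Fintype V] [DecidableEq V] (A : V → V → Prop) [DecidableRel A]
    (x nx x1 x2 x3 x4 x5 u1 u2 u3 u4 u5 u6 : V)
    (hdistinct : List.Pairwise (· ≠ ·) [x, nx, x1, x2, x3, x4, x5, u1, u2, u3, u4, u5, u6])
    (ha1 : A x1 x) (ha2 : A x1 nx) (ha3 : A x2 x1)
    (ha4 : A x3 x2) (ha5 : A x4 x2) (ha6 : A x5 x2)
    (ha7 : A u1 x) (ha8 : A u2 x) (ha9 : A u3 x)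
    (ha10 : A u4 nx) (ha11 : A u5 nx) (ha12 : A u6 nx)
    (hnx2 : nbr A x2 = {x1, x3, x4, x5})
    (hnx1 : nbr A x1 = {x, nx, x2})
    (f : V → ℕ) (hf : ∀ v, 1 ≤ f v ∧ f v ≤ 2)
    (htan : ∀ u v, A u v → Svert A f u < Svert A f v) :
    3 ≤ f x + f nx := by
  simp only [List.pairwise_cons, List.mem_cons, List.not_mem_nil, or_false,
    forall_eq_or_imp, forall_eq, ne_eq, List.Pairwise.nil] at hdistinct
  obtain ⟨⟨hxnx, -, hx2, -⟩, ⟨-, hnx2', -⟩, ⟨hx12, hx13, hx14, hx15, -⟩, -, ⟨hx34, hx35, -⟩,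
    ⟨hx45, -⟩, -⟩ := hdistinct
  have h := htan x2 x1 ha3
  rw [Svert, Svert, hnx2, hnx1] at h
  rw [show ({x1, x3, x4, x5} : Finset V) = insert x1 (insert x3 (insert x4 {x5})) from rfl,
    show ({x, nx, x2} : Finset V) = insert x (insert nx {x2}) from rfl] at h
  rw [Finset.sum_insert (by simp [hx13, hx14, hx15]), Finset.sum_insert (by simp [hx34, hx35]),
    Finset.sum_insert (by simp [hx45]), Finset.sum_singleton] at h
  rw [Finset.sum_insert (by simp [hxnx, hx2]), Finset.sum_insert (by simp [hnx2']),
    Finset.sum_singleton] at h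
  have h1 := hf x1; have h2 := hf x2; have h3 := hf x3; have h4 := hf x4; have h5 := hf x5
  omega
end

section
/- Consider the clause gadget digraph for a clause c = y ∨ z ∨ w: vertices c, c¹, c², c³, c⁴, c⁵ together with literal vertices y, z, w (distinct), with arcs (c,y), (c,z), (c,w), (c,c¹), (c²,c¹), (c³,c¹), (c⁴,c¹), (c⁵,c). If f is a topological additive 2-numbering of the containing digraph, then f(y) + f(z) + f(w) ≤ 5; in particular at least one of f(y), f(z), f(w) equals 1. -/
open Finset

/-- clause gadget — any topological additive 2-numbering satisfies
`f(y) + f(z) + f(w) ≤ 5`, so at least one literal gets label 1. -/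
theorem stmt_10 {V : Type} [Fintype V] [DecidableEq V] (A : V → V → Prop) [DecidableRel A]
    (c c1 c2 c3 c4 c5 y z w : V)
    (hdistinct : List.Pairwise (· ≠ ·) [c, c1, c2, c3, c4, c5, y, z, w])
    (ha1 : A c y) (ha2 : A c z) (ha3 : A c w) (ha4 : A c c1)
    (ha5 : A c2 c1) (ha6 : A c3 c1) (ha7 : A c4 c1) (ha8 : A c5 c)
    (hnc1 : nbr A c1 = {c, c2, c3, c4})
    (hnc : nbr A c = {y, z, w, c1, c5})
    (f : V → ℕ) (hf : ∀ v, 1 ≤ f v ∧ f v ≤ 2)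
    (htan : ∀ u v, A u v → Svert A f u < Svert A f v) :
    f y + f z + f w ≤ 5 ∧ (f y = 1 ∨ f z = 1 ∨ f w = 1) := by
  simp only [List.pairwise_cons, List.mem_cons, List.not_mem_nil, or_false,
    forall_eq_or_imp, forall_eq] at hdistinct
  obtain ⟨⟨hcc1, hcc2, hcc3, hcc4, hcc5, hcy, hcz, hcw⟩,
    ⟨hc1c2, hc1c3, hc1c4, hc1c5, hc1y, hc1z, hc1w⟩,
    ⟨hc2c3, hc2c4, hc2c5, hc2y, hc2z, hc2w⟩,
    ⟨hc3c4, hc3c5, hc3y, hc3z, hc3w⟩,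
    ⟨hc4c5, hc4y, hc4z, hc4w⟩,
    ⟨hc5y, hc5z, hc5w⟩, ⟨hyz, hyw⟩, hzw, _⟩ := hdistinct
  have h := htan c c1 ha4
  rw [Svert, Svert, hnc1, hnc] at h
  have e1 : ∑ x ∈ ({c, c2, c3, c4} : Finset V), f x = f c + f c2 + f c3 + f c4 := by
    rw [Finset.sum_insert (by simp [hcc2, hcc3, hcc4]),
      Finset.sum_insert (by simp [hc2c3, hc2c4]),
      Finset.sum_insert (by simp [hc3c4]), Finset.sum_singleton]
    omega
  have e2 : ∑ x ∈ ({y, z, w, c1, c5} : Finset V), f x = f y + f z + f w + f c1 + f c5 := by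
    rw [Finset.sum_insert (by simp [hyz, hyw, hc1y.symm, hc5y.symm]),
      Finset.sum_insert (by simp [hzw, hc1z.symm, hc5z.symm]),
      Finset.sum_insert (by simp [hc1w.symm, hc5w.symm]),
      Finset.sum_insert (by simp [hc1c5]), Finset.sum_singleton]
    omega
  rw [e1, e2] at h
  have := hf c; have := hf c1; have := hf c2; have := hf c3; have := hf c4
  have := hf c5; have := hf y; have := hf z; have := hf w
  omega
end

section
/- Let D be a monotone complete bipartite digraph with parts V_1, V_2 (underlying graph complete bipartite, all arcs from V_1 to V_2). Then η_t(D) = max(⌈(|V_2|+1)/|V_1|⌉, 1) if |V_1| ≥ 1; equivalently, with s_2 = |V_2| and s_1 = max(1+|V_2|, |V_1|), η_t(D) = max(⌈s_1/|V_1|⌉, ⌈s_2/|V_2|⌉) = ⌈s_1/|V_1|⌉. -/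
open Finset

lemma one_le_ceilDiv_nat {a b : ℕ} (hb : 0 < b) (ha : 0 < a) : 1 ≤ a ⌈/⌉ b := by
  by_contra h
  have h0 : a ⌈/⌉ b ≤ 0 := by omega
  rw [ceilDiv_le_iff_le_mul hb] at h0
  omega

/-- `η_t` of a monotone complete bipartite digraph. -/
theorem stmt_14 {V : Type} [Fintype V] [DecidableEq V] (A : V → V → Prop) [DecidableRel A]
    (V1 V2 : Finset V) (hdisj : Disjoint V1 V2) (hcover : V1 ∪ V2 = Finset.univ)
    (h1 : V1.Nonempty) (h2 : V2.Nonempty)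
    (harcs : ∀ u v, A u v ↔ (u ∈ V1 ∧ v ∈ V2)) :
    etat A = max ((V2.card + 1) ⌈/⌉ V1.card) 1 ∧
    etat A = (max (1 + V2.card) V1.card) ⌈/⌉ V1.card := by
  have hn1 : 0 < V1.card := h1.card_pos
  have hn2 : 0 < V2.card := h2.card_pos
  set m := (V2.card + 1) ⌈/⌉ V1.card with hm
  have hm1 : 1 ≤ m := one_le_ceilDiv_nat hn1 (by omega)
  -- neighborhoods
  have hnbr1 : ∀ u ∈ V1, nbr A u = V2 := by
    intro u hu
    ext w
    simp only [nbr, mem_filter, mem_univ, true_and, harcs]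
    constructor
    · rintro (⟨_, h⟩ | ⟨_, hu2⟩)
      · exact h
      · exact absurd hu2 (Finset.disjoint_left.mp hdisj hu)
    · intro hw; exact Or.inl ⟨hu, hw⟩
  have hnbr2 : ∀ v ∈ V2, nbr A v = V1 := by
    intro v hv
    ext w
    simp only [nbr, mem_filter, mem_univ, true_and, harcs]
    constructor
    · rintro (⟨hv1, _⟩ | ⟨h, _⟩)
      · exact absurd hv (Finset.disjoint_left.mp hdisj hv1)
      · exact h
    · intro hw; exact Or.inr ⟨hw, hv⟩
  -- TAN characterization
  have hTAN : ∀ f : V → ℕ, IsTAN A f ↔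
      ((∀ v, 1 ≤ f v) ∧ ∑ w ∈ V2, f w < ∑ w ∈ V1, f w) := by
    intro f
    constructor
    · rintro ⟨hpos, harc⟩
      refine ⟨hpos, ?_⟩
      obtain ⟨u, hu⟩ := h1
      obtain ⟨v, hv⟩ := h2
      have := harc u v ((harcs u v).mpr ⟨hu, hv⟩)
      rwa [Svert, Svert, hnbr1 u hu, hnbr2 v hv] at this
    · rintro ⟨hpos, hsum⟩
      refine ⟨hpos, fun u v huv => ?_⟩
      obtain ⟨hu, hv⟩ := (harcs u v).mp huv
      rwa [Svert, Svert, hnbr1 u hu, hnbr2 v hv]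
  -- membership of m
  have hmem : m ∈ {k | ∃ f, IsTAN A f ∧ ∀ v, f v ≤ k} := by
    refine ⟨fun v => if v ∈ V1 then m else 1, ?_, ?_⟩
    · rw [hTAN]
      constructor
      · intro v
        show 1 ≤ if v ∈ V1 then m else 1
        split <;> omega
      · have e1 : ∑ w ∈ V1, (if w ∈ V1 then m else 1) = V1.card * m := by
          rw [Finset.sum_congr rfl (fun w hw => if_pos hw), Finset.sum_const, smul_eq_mul]
        have e2 : ∑ w ∈ V2, (if w ∈ V1 then m else 1) = V2.card := by
          rw [Finset.sum_congr rfl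
            (fun w hw => if_neg (Finset.disjoint_right.mp hdisj hw)),
            Finset.sum_const, smul_eq_mul, mul_one]
        rw [e1, e2]
        have h3 : V2.card + 1 ≤ V1.card * m := by
          rw [hm]
          simpa [smul_eq_mul] using le_smul_ceilDiv hn1 (b := V2.card + 1)
        omega
    · intro v
      show (if v ∈ V1 then m else 1) ≤ m
      split <;> omega
  -- lower bound
  have hlow : ∀ k ∈ {k | ∃ f, IsTAN A f ∧ ∀ v, f v ≤ k}, m ≤ k := by
    rintro k ⟨f, hf, hk⟩
    rw [hTAN] at hf
    obtain ⟨hpos, hsum⟩ := hf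
    have hub : ∑ w ∈ V1, f w ≤ V1.card * k := by
      calc ∑ w ∈ V1, f w ≤ ∑ _w ∈ V1, k := Finset.sum_le_sum fun w _ => hk w
        _ = V1.card * k := by rw [Finset.sum_const, smul_eq_mul]
      done
    have hlb : V2.card ≤ ∑ w ∈ V2, f w := by
      calc (V2.card : ℕ) = ∑ _w ∈ V2, 1 := by rw [Finset.sum_const, smul_eq_mul, mul_one]
        _ ≤ ∑ w ∈ V2, f w := Finset.sum_le_sum fun w _ => hpos w
    rw [hm, ceilDiv_le_iff_le_mul hn1]
    omega
  have hetat : etat A = m :=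
    le_antisymm (Nat.sInf_le hmem) (le_csInf ⟨m, hmem⟩ hlow)
  refine ⟨by rw [hetat, max_eq_left hm1], ?_⟩
  rw [hetat]
  by_cases hc : V1.card ≤ V2.card + 1
  · rw [max_eq_left (by omega), hm, add_comm 1 V2.card]
  · push_neg at hc
    rw [max_eq_right (by omega)]
    have e1 : m = 1 := by
      refine le_antisymm ?_ hm1
      rw [hm, ceilDiv_le_iff_le_mul hn1]; omega
    have e2 : V1.card ⌈/⌉ V1.card = 1 := by
      refine le_antisymm ?_ (one_le_ceilDiv_nat hn1 hn1)
      rw [ceilDiv_le_iff_le_mul hn1]; omega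
    rw [e1, e2]
end

section
/- Let f : V → {1,…,k} be a topological additive k-numbering of a DAG D, let Q be a clique in the underlying graph of D, and for q ∈ Q define Y_q = Σ_{w∈N(q)∖Q} f(w) − f(q). Then the map q ↦ Y_q is strictly increasing along the linear order of Q induced by the arcs, and |N(q)∖Q| − k ≤ Y_q ≤ k·|N(q)∖Q| − 1 for every q ∈ Q. -/
open Finset

/-- for a clique `Q` and a topological additive `k`-numbering `f`, the quantity
`Y_q = Σ_{w ∈ N(q)∖Q} f(w) − f(q)` is strictly increasing along arcs within `Q` and satisfies
`|N(q)∖Q| − k ≤ Y_q ≤ k·|N(q)∖Q| − 1`. -/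
theorem stmt_15 {V : Type} [Fintype V] [DecidableEq V] (A : V → V → Prop) [DecidableRel A]
    (hacyc : Acyclic A) (k : ℕ) (f : V → ℕ)
    (htan : IsTAN A f) (hk : ∀ v, f v ≤ k)
    (Q : Finset V) (hclique : ∀ q₁ ∈ Q, ∀ q₂ ∈ Q, q₁ ≠ q₂ → (A q₁ q₂ ∨ A q₂ q₁)) :
    (∀ q₁ ∈ Q, ∀ q₂ ∈ Q, A q₁ q₂ →
      (∑ w ∈ (nbr A q₁) \ Q, (f w : ℤ)) - f q₁ < (∑ w ∈ (nbr A q₂) \ Q, (f w : ℤ)) - f q₂) ∧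
    (∀ q ∈ Q, ((((nbr A q) \ Q).card : ℤ) - k ≤ (∑ w ∈ (nbr A q) \ Q, (f w : ℤ)) - f q ∧
      (∑ w ∈ (nbr A q) \ Q, (f w : ℤ)) - f q ≤ k * (((nbr A q) \ Q).card : ℤ) - 1)) := by

  have hnoself : ∀ v, v ∉ nbr A v := by
    intro v hv
    simp only [nbr, Finset.mem_filter] at hv
    exact hacyc v (Relation.TransGen.single (hv.2.elim id id))
  -- decomposition: Svert q = Σ_{N\Q} f + Σ_Q f - f q  (in ℤ) for q ∈ Q
  have hdecomp : ∀ q ∈ Q, (Svert A f q : ℤ) =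
      (∑ w ∈ (nbr A q) \ Q, (f w : ℤ)) + (∑ w ∈ Q, (f w : ℤ)) - f q := by
    intro q hq
    have hinter : (nbr A q) ∩ Q = Q.erase q := by
      ext w
      simp only [Finset.mem_inter, Finset.mem_erase, nbr, Finset.mem_filter, Finset.mem_univ,
        true_and]
      constructor
      · rintro ⟨h1, h2⟩
        refine ⟨?_, h2⟩
        intro heq; subst heq
        exact hacyc w (Relation.TransGen.single (h1.elim id id))
      · rintro ⟨hne, hw⟩
        exact ⟨(hclique q hq w hw (Ne.symm hne)), hw⟩
    have hsplit : (∑ w ∈ nbr A q, (f w : ℤ)) =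
        (∑ w ∈ (nbr A q) \ Q, (f w : ℤ)) + ∑ w ∈ (nbr A q) ∩ Q, (f w : ℤ) := by
      rw [← Finset.sum_union (Finset.disjoint_sdiff_inter _ _), Finset.sdiff_union_inter]
    have herase : (∑ w ∈ Q.erase q, (f w : ℤ)) = (∑ w ∈ Q, (f w : ℤ)) - f q := by
      rw [Finset.sum_erase_eq_sub hq]
    have : (Svert A f q : ℤ) = ∑ w ∈ nbr A q, (f w : ℤ) := by
      simp [Svert, Nat.cast_sum]
    rw [this, hsplit, hinter, herase]; ring
  constructor
  · intro q₁ hq₁ q₂ hq₂ harc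
    have hS : (Svert A f q₁ : ℤ) < Svert A f q₂ := by
      exact_mod_cast htan.2 q₁ q₂ harc
    have h1 := hdecomp q₁ hq₁
    have h2 := hdecomp q₂ hq₂
    omega
  · intro q hq
    constructor
    · have hsum : (((nbr A q) \ Q).card : ℤ) ≤ ∑ w ∈ (nbr A q) \ Q, (f w : ℤ) := by
        calc (((nbr A q) \ Q).card : ℤ) = ∑ _w ∈ (nbr A q) \ Q, (1 : ℤ) := by simp
        _ ≤ _ := Finset.sum_le_sum fun w _ => by exact_mod_cast htan.1 w
      have hfq : (f q : ℤ) ≤ k := by exact_mod_cast hk q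
      omega
    · have hsum : (∑ w ∈ (nbr A q) \ Q, (f w : ℤ)) ≤ k * (((nbr A q) \ Q).card : ℤ) := by
        calc (∑ w ∈ (nbr A q) \ Q, (f w : ℤ)) ≤ ∑ _w ∈ (nbr A q) \ Q, (k : ℤ) :=
          Finset.sum_le_sum fun w _ => by exact_mod_cast hk w
        _ = k * (((nbr A q) \ Q).card : ℤ) := by rw [Finset.sum_const]; ring
      have hfq : (1 : ℤ) ≤ f q := by exact_mod_cast htan.1 q
      omega
end
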